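/- If Γ ⊢_{NWF_N} A then Γ ⊢_{HWF_N} A; that is, every formula derivable from Γ in the natural deduction system NWF_N is derivable from Γ in the restricted Hilbert system WF_N. -/

import Mathlib

/-- Formulas of subintuitionistic propositional logic. -/
inductive Fml : Type
  | atom : ℕ → Fml
  | bot  : Fml
  | and  : Fml → Fml → Fml
  | or   : Fml → Fml → Fml
  | imp  : Fml → Fml → Fml
deriving DecidableEq

/-- `A ↔ B` abbreviates `(A → B) ∧ (B → A)`. -/
def Fml.biimp (A B : Fml) : Fml := (A.imp B).and (B.imp A)

/-- The extra axiom schemes / rules among I, C, D, Ĉ, D̂, N, N₂. -/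
inductive ExtAx : Type
  | I | C | D | Chat | Dhat | N | N2
deriving DecidableEq

/-- Theorems of the Hilbert system WF extended with the schemes/rules in `E`
(derivations with no assumptions; all rules unrestricted here). -/
inductive HThm (E : Set ExtAx) : Fml → Prop
  | ax1 (A B : Fml)   : HThm E (A.imp (A.or B))
  | ax2 (A B : Fml)   : HThm E (B.imp (A.or B))
  | ax3 (A B : Fml)   : HThm E ((A.and B).imp A)
  | ax4 (A B : Fml)   : HThm E ((A.and B).imp B)
  | ax7 (A B C : Fml) : HThm E ((A.and (B.or C)).imp ((A.and B).or (A.and C)))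
  | ax8 (A : Fml)     : HThm E (A.imp A)
  | ax14 (A : Fml)    : HThm E (Fml.bot.imp A)
  | mp {A B : Fml}    : HThm E A → HThm E (A.imp B) → HThm E B
  | af {A : Fml} (B : Fml) : HThm E A → HThm E (B.imp A)
  | tr {A B C : Fml}  : HThm E (A.imp B) → HThm E (B.imp C) → HThm E (A.imp C)
  | rc {A B C : Fml}  : HThm E (A.imp B) → HThm E (A.imp C) → HThm E (A.imp (B.and C))
  | rd {A B C : Fml}  : HThm E (A.imp C) → HThm E (B.imp C) → HThm E ((A.or B).imp C)
  | conj {A B : Fml}  : HThm E A → HThm E B → HThm E (A.and B)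
  | re {A B C D : Fml} : HThm E (A.biimp B) → HThm E (C.biimp D) →
      HThm E ((A.imp C).biimp (B.imp D))
  | axI (A B C : Fml) : ExtAx.I ∈ E →
      HThm E (((A.imp B).and (B.imp C)).imp (A.imp C))
  | axC (A B C : Fml) : ExtAx.C ∈ E →
      HThm E (((A.imp B).and (A.imp C)).imp (A.imp (B.and C)))
  | axD (A B C : Fml) : ExtAx.D ∈ E →
      HThm E (((A.imp C).and (B.imp C)).imp ((A.or B).imp C))
  | axChat (A B C : Fml) : ExtAx.Chat ∈ E →
      HThm E ((A.imp (B.and C)).imp ((A.imp B).and (A.imp C)))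
  | axDhat (A B C : Fml) : ExtAx.Dhat ∈ E →
      HThm E (((A.or B).imp C).imp ((A.imp C).and (B.imp C)))
  | ruleN {A B C D : Fml} : ExtAx.N ∈ E →
      HThm E (A.imp (B.or C)) → HThm E (C.imp (A.or D)) →
      HThm E ((A.and D).imp B) → HThm E ((C.and B).imp D) →
      HThm E ((A.imp B).biimp (C.imp D))
  | ruleN2 {A B C D : Fml} : ExtAx.N2 ∈ E →
      HThm E (C.imp (A.or D)) → HThm E ((C.and B).imp D) →
      HThm E ((A.imp B).imp (C.imp D))

/-- Restricted derivability from assumptions in the Hilbert system WF + `E`: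
besides assumptions and theorems, only the conjunction rule is unrestricted, and
modus ponens may be used only when the major premise `A → B` is a theorem
(derived with no assumptions); all other rules are confined to theorems. -/
inductive HDer (E : Set ExtAx) (Γ : Set Fml) : Fml → Prop
  | hyp {A : Fml}  : A ∈ Γ → HDer E Γ A
  | thm {A : Fml}  : HThm E A → HDer E Γ A
  | conj {A B : Fml} : HDer E Γ A → HDer E Γ B → HDer E Γ (A.and B)
  | mp {A B : Fml} : HDer E Γ A → HThm E (A.imp B) → HDer E Γ B

/-- Tags for the optional implication-introduction rules of the natural
deduction systems. -/
inductive NRule : Type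
  | impI1 | impI2 | impN | impN2 | impChat | impDhat | impAnd | impOr | impTr
deriving DecidableEq

/-- Natural deduction derivations for the system with optional rules `R`.
`Deriv R Γ A` is a derivation of `A` all of whose open assumptions lie in `Γ`. -/
inductive Deriv (R : Set NRule) : Set Fml → Fml → Type
  | hyp (Γ : Set Fml) (A : Fml) : A ∈ Γ → Deriv R Γ A
  | andI {Γ : Set Fml} {A B : Fml} :
      Deriv R Γ A → Deriv R Γ B → Deriv R Γ (A.and B)
  | andE1 {Γ : Set Fml} {A B : Fml} :
      Deriv R Γ (A.and B) → Deriv R Γ A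
  | andE2 {Γ : Set Fml} {A B : Fml} :
      Deriv R Γ (A.and B) → Deriv R Γ B
  | orI1 {Γ : Set Fml} {A : Fml} (B : Fml) :
      Deriv R Γ A → Deriv R Γ (A.or B)
  | orI2 {Γ : Set Fml} (A : Fml) {B : Fml} :
      Deriv R Γ B → Deriv R Γ (A.or B)
  | orE {Γ : Set Fml} {A B C : Fml} :
      Deriv R Γ (A.or B) → Deriv R (insert A Γ) C → Deriv R (insert B Γ) C →
      Deriv R Γ C
  | botE {Γ : Set Fml} (A : Fml) :
      Deriv R Γ Fml.bot → Deriv R Γ A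
  | impI {Γ : Set Fml} {A B : Fml} :
      Deriv R {A} B → Deriv R Γ (A.imp B)
  | impE {Γ : Set Fml} {A B : Fml} :
      Deriv R Γ A → Deriv R (∅ : Set Fml) (A.imp B) → Deriv R Γ B
  | impI1 {Γ : Set Fml} {A B D : Fml} :
      NRule.impI1 ∈ R → Deriv R {B} D → Deriv R {D} B →
      Deriv R Γ ((A.imp B).imp (A.imp D))
  | impI2 {Γ : Set Fml} {A B D : Fml} :
      NRule.impI2 ∈ R → Deriv R {B} D → Deriv R {D} B →
      Deriv R Γ ((B.imp A).imp (D.imp A))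
  | impIN {Γ : Set Fml} {A B C D : Fml} :
      NRule.impN ∈ R →
      Deriv R {A} (C.or B) → Deriv R {D} B → Deriv R {C} (A.or D) → Deriv R {B} D →
      Deriv R Γ ((A.imp B).imp (C.imp D))
  | impIN2 {Γ : Set Fml} {A B C D : Fml} :
      NRule.impN2 ∈ R →
      Deriv R {C} (A.or D) → Deriv R {B} D →
      Deriv R Γ ((A.imp B).imp (C.imp D))
  | impIChat {Γ : Set Fml} {A B : Fml} (C : Fml) :
      NRule.impChat ∈ R → Deriv R {A} B →
      Deriv R Γ ((C.imp A).imp (C.imp B))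
  | impIDhat {Γ : Set Fml} {A B : Fml} (C : Fml) :
      NRule.impDhat ∈ R → Deriv R {A} B →
      Deriv R Γ ((B.imp C).imp (A.imp C))
  | impIAnd {Γ : Set Fml} {A B C : Fml} :
      NRule.impAnd ∈ R → Deriv R Γ (A.imp B) → Deriv R Γ (A.imp C) →
      Deriv R Γ (A.imp (B.and C))
  | impIOr {Γ : Set Fml} {A B C : Fml} :
      NRule.impOr ∈ R → Deriv R Γ (A.imp C) → Deriv R Γ (B.imp C) →
      Deriv R Γ ((A.or B).imp C)
  | impITr {Γ : Set Fml} {A B C : Fml} :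
      NRule.impTr ∈ R → Deriv R Γ (A.imp B) → Deriv R Γ (B.imp C) →
      Deriv R Γ (A.imp C)

/-- `Γ ⊢ A` in the natural deduction system with optional rules `R`. -/
def NDer (R : Set NRule) (Γ : Set Fml) (A : Fml) : Prop :=
  Nonempty (Deriv R Γ A)

/-- A derivation may serve as the major premise of an elimination rule in a
normal derivation: it is an assumption or ends with an elimination rule
different from ∨E (i.e. ∧E or →E). -/
def Deriv.MajorOK : ∀ {R : Set NRule} {Γ : Set Fml} {A : Fml}, Deriv R Γ A → Prop
  | _, _, _, .hyp _ _ _ => True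
  | _, _, _, .andE1 _   => True
  | _, _, _, .andE2 _   => True
  | _, _, _, .impE _ _  => True
  | _, _, _, _          => False

/-- A derivation is normal if every major premise of an elimination rule is
either an assumption or the conclusion of an elimination rule different
from ∨E. -/
def Deriv.Normal {R : Set NRule} : ∀ {Γ : Set Fml} {A : Fml}, Deriv R Γ A → Prop
  | _, _, .hyp _ _ _ => True
  | _, _, .andI d e => d.Normal ∧ e.Normal
  | _, _, .andE1 d => d.MajorOK ∧ d.Normal
  | _, _, .andE2 d => d.MajorOK ∧ d.Normal
  | _, _, .orI1 _ d => d.Normal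
  | _, _, .orI2 _ d => d.Normal
  | _, _, .orE d e f => d.MajorOK ∧ d.Normal ∧ e.Normal ∧ f.Normal
  | _, _, .botE _ d => d.Normal
  | _, _, .impI d => d.Normal
  | _, _, .impE d e => e.MajorOK ∧ d.Normal ∧ e.Normal
  | _, _, .impI1 _ d e => d.Normal ∧ e.Normal
  | _, _, .impI2 _ d e => d.Normal ∧ e.Normal
  | _, _, .impIN _ d e f g => d.Normal ∧ e.Normal ∧ f.Normal ∧ g.Normal
  | _, _, .impIN2 _ d e => d.Normal ∧ e.Normal
  | _, _, .impIChat _ _ d => d.Normal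
  | _, _, .impIDhat _ _ d => d.Normal
  | _, _, .impIAnd _ d e => d.Normal ∧ e.Normal
  | _, _, .impIOr _ d e => d.Normal ∧ e.Normal
  | _, _, .impITr _ d e => d.Normal ∧ e.Normal

namespace NtoH

/-- Finite conjunctions of formulas from `Γ` (with a trivial "top"). -/
inductive Conj (Γ : Set Fml) : Fml → Prop
  | top : Conj Γ (Fml.bot.imp Fml.bot)
  | mem {A : Fml} : A ∈ Γ → Conj Γ A
  | and {A B : Fml} : Conj Γ A → Conj Γ B → Conj Γ (A.and B)

variable {E : Set ExtAx}

lemma char {Γ : Set Fml} {A : Fml} (h : HDer E Γ A) :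
    ∃ G, Conj Γ G ∧ HThm E (G.imp A) := by
  induction h with
  | hyp h => exact ⟨_, Conj.mem h, HThm.ax8 _⟩
  | thm h => exact ⟨_, Conj.top, HThm.af _ h⟩
  | conj _ _ ih1 ih2 =>
      obtain ⟨G1, c1, t1⟩ := ih1; obtain ⟨G2, c2, t2⟩ := ih2
      exact ⟨G1.and G2, c1.and c2,
        HThm.rc (HThm.tr (HThm.ax3 _ _) t1) (HThm.tr (HThm.ax4 _ _) t2)⟩
  | mp _ h ih => obtain ⟨G, c, t⟩ := ih; exact ⟨G, c, t.tr h⟩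

lemma conjDer {Γ : Set Fml} {G : Fml} (c : Conj Γ G) : HDer E Γ G := by
  induction c with
  | top => exact HDer.thm (HThm.ax8 _)
  | mem h => exact HDer.hyp h
  | and _ _ ih1 ih2 => exact HDer.conj ih1 ih2

lemma conjSing {A G : Fml} (c : Conj ({A} : Set Fml) G) : HThm E (A.imp G) := by
  induction c with
  | top => exact HThm.af _ (HThm.ax8 _)
  | mem h => cases h; exact HThm.ax8 _
  | and _ _ ih1 ih2 => exact HThm.rc ih1 ih2

lemma conjEmpty {G : Fml} (c : Conj (∅ : Set Fml) G) : HThm E G := by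
  induction c with
  | top => exact HThm.ax8 _
  | mem h => exact absurd h (Set.notMem_empty _)
  | and _ _ ih1 ih2 => exact HThm.conj ih1 ih2

lemma sing {A B : Fml} (h : HDer E ({A} : Set Fml) B) : HThm E (A.imp B) := by
  obtain ⟨G, c, t⟩ := char h
  exact (conjSing c).tr t

lemma emptyThm {A : Fml} (h : HDer E (∅ : Set Fml) A) : HThm E A := by
  obtain ⟨G, c, t⟩ := char h
  exact (conjEmpty c).mp t

lemma projL (X Y Z : Fml) : HThm E (((X.and Y).and Z).imp (X.and Z)) :=
  HThm.rc ((HThm.ax3 _ _).tr (HThm.ax3 _ _)) (HThm.ax4 _ _)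

lemma projR (X Y Z : Fml) : HThm E (((X.and Y).and Z).imp (Y.and Z)) :=
  HThm.rc ((HThm.ax3 _ _).tr (HThm.ax4 _ _)) (HThm.ax4 _ _)

lemma conjInsert {Γ : Set Fml} {A G : Fml} (c : Conj (insert A Γ) G) :
    ∃ H, Conj Γ H ∧ HThm E ((H.and A).imp G) := by
  induction c with
  | top => exact ⟨_, Conj.top, HThm.ax3 _ _⟩
  | @mem X h =>
      rcases h with h | h
      · subst h; exact ⟨_, Conj.top, HThm.ax4 _ _⟩
      · exact ⟨X, Conj.mem h, HThm.ax3 _ _⟩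
  | and _ _ ih1 ih2 =>
      obtain ⟨H1, c1, t1⟩ := ih1; obtain ⟨H2, c2, t2⟩ := ih2
      exact ⟨H1.and H2, c1.and c2,
        HThm.rc ((projL _ _ _).tr t1) ((projR _ _ _).tr t2)⟩

lemma toH {Γ : Set Fml} {A : Fml} (d : Deriv {NRule.impN} Γ A) :
    HDer ({ExtAx.N} : Set ExtAx) Γ A := by
  induction d with
  | hyp _ _ h => exact HDer.hyp h
  | andI _ _ ih1 ih2 => exact HDer.conj ih1 ih2
  | andE1 _ ih => exact ih.mp (HThm.ax3 _ _)
  | andE2 _ ih => exact ih.mp (HThm.ax4 _ _)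
  | orI1 B _ ih => exact ih.mp (HThm.ax1 _ _)
  | orI2 A _ ih => exact ih.mp (HThm.ax2 _ _)
  | @orE _ A B C _ _ _ ih0 ih1 ih2 =>
      obtain ⟨G1, c1, t1⟩ := char ih1
      obtain ⟨H1, cH1, tH1⟩ := conjInsert c1
      obtain ⟨G2, c2, t2⟩ := char ih2
      obtain ⟨H2, cH2, tH2⟩ := conjInsert c2
      have tA : HThm ({ExtAx.N} : Set ExtAx) (((H1.and H2).and A).imp C) :=
        (projL _ _ _).tr (tH1.tr t1)
      have tB : HThm ({ExtAx.N} : Set ExtAx) (((H1.and H2).and B).imp C) :=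
        (projR _ _ _).tr (tH2.tr t2)
      have big : HThm ({ExtAx.N} : Set ExtAx) (((H1.and H2).and (A.or B)).imp C) :=
        (HThm.ax7 _ _ _).tr (HThm.rd tA tB)
      exact ((conjDer (cH1.and cH2)).conj ih0).mp big
  | botE A _ ih => exact ih.mp (HThm.ax14 _)
  | impI _ ih => exact HDer.thm (sing ih)
  | impE _ _ ih1 ih2 => exact ih1.mp (emptyThm ih2)
  | impI1 h => exact absurd h (by simp)
  | impI2 h => exact absurd h (by simp)
  | @impIN _ A B C D h _ _ _ _ ih1 ih2 ih3 ih4 =>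
      have t1 : HThm ({ExtAx.N} : Set ExtAx) (A.imp (B.or C)) :=
        (sing ih1).tr (HThm.rd (HThm.ax2 _ _) (HThm.ax1 _ _))
      have t2 : HThm ({ExtAx.N} : Set ExtAx) ((A.and D).imp B) :=
        (HThm.ax4 _ _).tr (sing ih2)
      have t3 : HThm ({ExtAx.N} : Set ExtAx) (C.imp (A.or D)) := sing ih3
      have t4 : HThm ({ExtAx.N} : Set ExtAx) ((C.and B).imp D) :=
        (HThm.ax4 _ _).tr (sing ih4)
      have n := HThm.ruleN (show ExtAx.N ∈ ({ExtAx.N} : Set ExtAx) from rfl) t1 t3 t2 t4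
      exact HDer.thm (n.mp (HThm.ax3 _ _))
  | impIN2 h => exact absurd h (by simp)
  | impIChat _ h => exact absurd h (by simp)
  | impIDhat _ h => exact absurd h (by simp)
  | impIAnd h => exact absurd h (by simp)
  | impIOr h => exact absurd h (by simp)
  | impITr h => exact absurd h (by simp)

end NtoH

theorem natded_to_hilbert_WFN (Γ : Set Fml) (A : Fml)
    (h : NDer {NRule.impN} Γ A) :
    HDer ({ExtAx.N} : Set ExtAx) Γ A := by
  obtain ⟨d⟩ := h
  exact NtoH.toH d
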